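/- Let V be a Banach space with a normalized 1-unconditional basis, identified with a space of scalar matrices in the natural way, and for a finitely supported scalar matrix A = (a_{m,n}) define ‖A‖_u as the smallest norm dominating the operator norm ‖·‖_{L(ℓ_p)} that makes the matrix units E_{i,j} a 1-unconditional system; concretely, for 1 < p < ∞ with conjugate q, and the algebra generated by matrices A = (a_{m,n} I_X) acting on ℓ_p(X) for X of trivial type, one has ‖A‖_{L(ℓ_p(X))} = sup { Σ_m Σ_n |x_n y_m a_{m,n}| : ‖(x_n)‖_p ‖(y_m)‖_q ≤ 1 } = ‖(|a_{m,n}|)‖_{L(ℓ_p)}. -/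

import Mathlib

open Filter Topology ENNReal

section helpers

variable {ι : Type*} {p : ℝ≥0∞}

/-- lp norm monotone under coordinatewise norm domination. -/
theorem lp_norm_mono {E F : ι → Type*} [∀ i, NormedAddCommGroup (E i)]
    [∀ i, NormedAddCommGroup (F i)] (hp : 0 < p.toReal)
    (f : lp E p) (g : lp F p) (h : ∀ i, ‖f i‖ ≤ ‖g i‖) : ‖f‖ ≤ ‖g‖ := by
  rw [lp.norm_eq_tsum_rpow hp f, lp.norm_eq_tsum_rpow hp g]
  apply Real.rpow_le_rpow (tsum_nonneg fun i => Real.rpow_nonneg (norm_nonneg _) _)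
  · exact Summable.tsum_le_tsum (fun i => Real.rpow_le_rpow (norm_nonneg _) (h i) hp.le)
      ((lp.memℓp f).summable hp) ((lp.memℓp g).summable hp)
  · positivity

theorem memℓp_of_finite_support {E : ι → Type*} [∀ i, NormedAddCommGroup (E i)]
    {f : ∀ i, E i} (hf : {i | f i ≠ 0}.Finite) : Memℓp f p := by
  rcases p.trichotomy with (rfl | rfl | hp)
  · exact memℓp_zero hf
  · apply memℓp_infty
    refine (hf.image fun i => ‖f i‖).union (Set.finite_singleton 0) |>.bddAbove.mono ?_
    rintro - ⟨i, rfl⟩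
    by_cases h : f i = 0
    · simp [h]
    · exact Or.inl ⟨i, h, rfl⟩
  · apply memℓp_gen
    apply summable_of_ne_finset_zero (s := hf.toFinset)
    intro i hi
    simp only [Set.Finite.mem_toFinset, Set.mem_setOf_eq, not_not] at hi
    simp [hi, Real.zero_rpow (by positivity : p.toReal ≠ 0)]

theorem real_conj_of_ennreal {p q : ℝ≥0∞} (hp : 1 < p) (hp' : p ≠ ∞) (hq : p⁻¹ + q⁻¹ = 1) :
    p.toReal.HolderConjugate q.toReal := by
  have hq0 : q ≠ 0 := by rintro rfl; simp at hq
  have hq' : q ≠ ∞ := by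
    rintro rfl
    simp [ENNReal.inv_eq_one] at hq
    exact hp.ne' hq
  have hp0 : p ≠ 0 := by positivity
  rw [Real.holderConjugate_iff]
  constructor
  · have := ENNReal.toReal_lt_toReal (by simp) hp' |>.mpr hp
    simpa using this
  · rw [← ENNReal.toReal_inv, ← ENNReal.toReal_inv,
      ← ENNReal.toReal_add (by simp [hp0]) (by simp [hq0]), hq]
    simp

/-- the coordinatewise "absolute value" of an lp element, as a complex-valued lp element. -/
theorem lp_abs {E : ι → Type*} [∀ i, NormedAddCommGroup (E i)] (hp : 0 < p.toReal) (f : lp E p) :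
    ∃ g : lp (fun _ : ι => ℂ) p, (∀ i, g i = (‖f i‖ : ℂ)) ∧ ‖g‖ = ‖f‖ := by
  have hmem : Memℓp (fun i => (‖f i‖ : ℂ)) p := by
    apply memℓp_gen
    simpa using (lp.memℓp f).summable hp
  refine ⟨⟨_, hmem⟩, fun i => rfl, ?_⟩
  apply le_antisymm (lp_norm_mono hp _ _ ?_) (lp_norm_mono hp _ _ ?_) <;> intro i <;>
    simp [show ((⟨_, hmem⟩ : lp (fun _ : ι => ℂ) p) i) = ((‖f i‖ : ℝ) : ℂ) from rfl]

end helpers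

/-- A Banach space has trivial (Rademacher) type iff it contains the spaces `ℓ₁ⁿ` uniformly:
for every `n` and `ε > 0` there are vectors `x 1, …, x n` in the unit ball on which every
linear combination almost attains the `ℓ₁`-lower bound. -/
def HasTrivialType (X : Type*) [NormedAddCommGroup X] [NormedSpace ℂ X] : Prop :=
  ∀ n : ℕ, ∀ ε : ℝ, 0 < ε → ∃ x : Fin n → X, (∀ j, ‖x j‖ ≤ 1) ∧
    ∀ c : Fin n → ℂ, (1 - ε) * ∑ j, ‖c j‖ ≤ ‖∑ j, c j • x j‖

/-- For `1 < p < ∞` with conjugate exponent `q`, and `X` an infinite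
dimensional Banach space of trivial type, the operator `Â` on `ℓ_p(X)` induced by a finitely
supported scalar matrix `A = (a_{m,n})`, `Â((x_n)_n) = (Σ_n a_{m,n} x_n)_m`, satisfies
`‖Â‖_{L(ℓ_p(X))} = sup { Σ_m Σ_n |x_n y_m a_{m,n}| : ‖(x_n)‖_p ‖(y_m)‖_q ≤ 1 }
              = ‖(|a_{m,n}|)‖_{L(ℓ_p)}`,
the operator norm on `ℓ_p` of the matrix of absolute values. -/
theorem stmt19 (p q : ℝ≥0∞) (hp : 1 < p) (hp' : p ≠ ∞) (hq : p⁻¹ + q⁻¹ = 1) [Fact (1 ≤ p)] [Fact (1 ≤ q)]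
    (X : Type*) [NormedAddCommGroup X] [NormedSpace ℂ X] [CompleteSpace X]
    (htriv : HasTrivialType X)
    (A : ℕ → ℕ → ℂ) (hA : {x : ℕ × ℕ | A x.1 x.2 ≠ 0}.Finite)
    (Ahat : lp (fun _ : ℕ => X) p →L[ℂ] lp (fun _ : ℕ => X) p)
    (hAhat : ∀ (x : lp (fun _ : ℕ => X) p) (m : ℕ), (Ahat x) m = ∑' n, A m n • x n)
    (Aabs : lp (fun _ : ℕ => ℂ) p →L[ℂ] lp (fun _ : ℕ => ℂ) p)
    (hAabs : ∀ (x : lp (fun _ : ℕ => ℂ) p) (m : ℕ),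
      (Aabs x) m = ∑' n, (‖A m n‖ : ℂ) * x n) :
    ‖Ahat‖ = sSup {s : ℝ | ∃ (x : lp (fun _ : ℕ => ℝ) p) (y : lp (fun _ : ℕ => ℝ) q),
        ‖x‖ * ‖y‖ ≤ 1 ∧ s = ∑' m, ∑' n, |x n| * |y m| * ‖A m n‖} ∧
      ‖Ahat‖ = ‖Aabs‖ := by
  classical
  have hr : 1 < p.toReal := by
    have := ENNReal.toReal_lt_toReal (by simp) hp' |>.mpr hp
    simpa using this
  have hr0 : 0 < p.toReal := lt_trans one_pos hr
  have hpq : p.toReal.HolderConjugate q.toReal := real_conj_of_ennreal hp hp' hq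
  have hs0 : 0 < q.toReal := hpq.symm.pos
  set N : Finset ℕ := hA.toFinset.image Prod.snd with hNdef
  have hN : ∀ m n, n ∉ N → A m n = 0 := by
    intro m n h
    by_contra h'
    exact h (Finset.mem_image.mpr ⟨(m, n), hA.mem_toFinset.mpr h', rfl⟩)
  have hAhat' : ∀ (x : lp (fun _ : ℕ => X) p) m, (Ahat x) m = ∑ n ∈ N, A m n • x n := by
    intro x m
    rw [hAhat]
    exact tsum_eq_sum fun n hn => by rw [hN m n hn, zero_smul]
  have hAabs' : ∀ (x : lp (fun _ : ℕ => ℂ) p) m,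
      (Aabs x) m = ∑ n ∈ N, (‖A m n‖ : ℂ) * x n := by
    intro x m
    rw [hAabs]
    exact tsum_eq_sum fun n hn => by rw [hN m n hn]; simp
  -- coordinates of `Aabs` applied to a nonneg real vector
  have habs_coord : ∀ (g : lp (fun _ : ℕ => ℂ) p) (u : ℕ → ℝ), (∀ n, 0 ≤ u n) →
      (∀ n, g n = (u n : ℂ)) → ∀ m,
      (Aabs g) m = ((∑ n ∈ N, ‖A m n‖ * u n : ℝ) : ℂ) ∧
        ‖(Aabs g) m‖ = ∑ n ∈ N, ‖A m n‖ * u n := by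
    intro g u hu hgu m
    have h1 : (Aabs g) m = ((∑ n ∈ N, ‖A m n‖ * u n : ℝ) : ℂ) := by
      rw [hAabs' g m]
      push_cast
      exact Finset.sum_congr rfl fun n _ => by rw [hgu n]
    refine ⟨h1, ?_⟩
    rw [h1, Complex.norm_real, Real.norm_eq_abs,
      abs_of_nonneg (Finset.sum_nonneg fun n _ => mul_nonneg (norm_nonneg _) (hu n))]
  have key1 : ‖Ahat‖ ≤ ‖Aabs‖ := by
    apply ContinuousLinearMap.opNorm_le_bound _ (norm_nonneg Aabs)
    intro x
    obtain ⟨g, hg, hgn⟩ := lp_abs hr0 x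
    have hcoord : ∀ m, ‖(Ahat x) m‖ ≤ ‖(Aabs g) m‖ := by
      intro m
      obtain ⟨-, h2⟩ := habs_coord g (fun n => ‖x n‖) (fun n => norm_nonneg _) hg m
      rw [h2, hAhat' x m]
      refine (norm_sum_le _ _).trans ?_
      exact Finset.sum_le_sum fun n _ => norm_smul_le _ _
    calc ‖Ahat x‖ ≤ ‖Aabs g‖ := lp_norm_mono hr0 _ _ hcoord
      _ ≤ ‖Aabs‖ * ‖g‖ := Aabs.le_opNorm g
      _ = ‖Aabs‖ * ‖x‖ := by rw [hgn]
  have key2 : ‖Aabs‖ ≤ ‖Ahat‖ := by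
    apply ContinuousLinearMap.opNorm_le_bound _ (norm_nonneg Ahat)
    intro x
    obtain ⟨g, hg, hgn⟩ := lp_abs hr0 x
    have hx_le : ‖Aabs x‖ ≤ ‖Aabs g‖ := by
      apply lp_norm_mono hr0
      intro m
      obtain ⟨-, h2⟩ := habs_coord g (fun n => ‖x n‖) (fun n => norm_nonneg _) hg m
      rw [h2, hAabs' x m]
      refine (norm_sum_le _ _).trans (Finset.sum_le_sum fun n _ => ?_)
      rw [norm_mul, Complex.norm_real, norm_norm]
    rw [← hgn]
    refine hx_le.trans ?_
    have claim : ∀ ε : ℝ, 0 < ε → ε < 1 → (1 - ε) * ‖Aabs g‖ ≤ ‖Ahat‖ * ‖g‖ := by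
      intro ε hε hε1
      obtain ⟨v, hv1, hv2⟩ := htriv N.card ε hε
      set ξf : ℕ → X :=
        fun n => if h : n ∈ N then ((‖x n‖ : ℂ)) • v (N.equivFin ⟨n, h⟩) else 0 with hξf
      have hξmem : Memℓp ξf p := by
        apply memℓp_of_finite_support
        apply N.finite_toSet.subset
        intro n hn
        simp only [Set.mem_setOf_eq] at hn
        by_contra h
        rw [Finset.mem_coe] at h
        exact hn (dif_neg h)
      set ξ : lp (fun _ : ℕ => X) p := ⟨ξf, hξmem⟩ with hξdef
      have hξcoe : ∀ n, ξ n = ξf n := fun n => rfl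
      have hξ_le : ∀ n, ‖ξ n‖ ≤ ‖g n‖ := by
        intro n
        rw [hξcoe, hg, Complex.norm_real, norm_norm]
        by_cases h : n ∈ N
        · rw [hξf]
          simp only [dif_pos h]
          calc ‖((‖x n‖ : ℂ)) • v (N.equivFin ⟨n, h⟩)‖
              = ‖x n‖ * ‖v (N.equivFin ⟨n, h⟩)‖ := by
                rw [norm_smul, Complex.norm_real, norm_norm]
            _ ≤ ‖x n‖ * 1 := by
                have := hv1 (N.equivFin ⟨n, h⟩)
                exact mul_le_mul_of_nonneg_left this (norm_nonneg _)
            _ = ‖x n‖ := mul_one _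
        · rw [hξf]
          simp [dif_neg h]
      have hcoord : ∀ m, (1 - ε) * ‖(Aabs g) m‖ ≤ ‖(Ahat ξ) m‖ := by
        intro m
        set e : Fin N.card ≃ {n // n ∈ N} := N.equivFin.symm with he
        set c : Fin N.card → ℂ := fun j => A m (e j) * (‖x (e j)‖ : ℂ) with hc
        have hAξ : (Ahat ξ) m = ∑ j, c j • v j := by
          rw [hAhat' ξ m, ← Finset.sum_coe_sort N (fun n => A m n • ξ n),
            ← Equiv.sum_comp e (fun i : {n // n ∈ N} => A m i • ξ (i : ℕ))]
          apply Finset.sum_congr rfl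
          intro j _
          rw [hξcoe, hξf]
          simp only [dif_pos (e j).2]
          rw [smul_smul]
          congr 2
          rw [Subtype.coe_eta, he]
          exact N.equivFin.apply_symm_apply j
        have h2 := (habs_coord g (fun n => ‖x n‖) (fun n => norm_nonneg _) hg m).2
        rw [h2, hAξ]
        refine le_trans ?_ (hv2 c)
        have hsum : ∑ j, ‖c j‖ = ∑ n ∈ N, ‖A m n‖ * ‖x n‖ := by
          rw [← Finset.sum_coe_sort N (fun n => ‖A m n‖ * ‖x n‖),
            ← Equiv.sum_comp e (fun i : {n // n ∈ N} => ‖A m (i : ℕ)‖ * ‖x (i : ℕ)‖)]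
          apply Finset.sum_congr rfl
          intro j _
          rw [hc, norm_mul, Complex.norm_real, norm_norm]
        rw [hsum]
      have hlp : (1 - ε) * ‖Aabs g‖ ≤ ‖Ahat ξ‖ := by
        have h1 : ‖(((1 - ε : ℝ) : ℂ)) • Aabs g‖ ≤ ‖Ahat ξ‖ := by
          apply lp_norm_mono hr0
          intro m
          rw [lp.coeFn_smul, Pi.smul_apply, norm_smul, Complex.norm_real, Real.norm_eq_abs,
            abs_of_nonneg (by linarith)]
          exact hcoord m
        rwa [norm_smul, Complex.norm_real, Real.norm_eq_abs, abs_of_nonneg (by linarith)] at h1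
      calc (1 - ε) * ‖Aabs g‖ ≤ ‖Ahat ξ‖ := hlp
        _ ≤ ‖Ahat‖ * ‖ξ‖ := Ahat.le_opNorm ξ
        _ ≤ ‖Ahat‖ * ‖g‖ :=
            mul_le_mul_of_nonneg_left (lp_norm_mono hr0 _ _ hξ_le) (norm_nonneg _)
    by_contra hcon
    push_neg at hcon
    set a := ‖Aabs g‖ with hadef
    set b := ‖Ahat‖ * ‖g‖ with hbdef
    have hb : 0 ≤ b := mul_nonneg (norm_nonneg _) (norm_nonneg _)
    have ha : 0 < a := lt_of_le_of_lt hb hcon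
    have hε : 0 < (a - b) / (2 * a) := div_pos (by linarith) (by linarith)
    have hε1 : (a - b) / (2 * a) < 1 := by
      rw [div_lt_one (by linarith)]
      linarith
    have hcl := claim _ hε hε1
    have h2 : (a - b) / (2 * a) * a = (a - b) / 2 := by
      field_simp
    rw [sub_mul, one_mul, h2] at hcl
    linarith
  have key : ‖Ahat‖ = ‖Aabs‖ := le_antisymm key1 key2
  refine ⟨?_, key⟩
  rw [key]
  have habs_mono : ∀ x g : lp (fun _ : ℕ => ℂ) p, (∀ i, g i = (‖x i‖ : ℂ)) →
      ‖Aabs x‖ ≤ ‖Aabs g‖ := by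
    intro x g hg
    apply lp_norm_mono hr0
    intro m
    obtain ⟨-, h2⟩ := habs_coord g (fun n => ‖x n‖) (fun n => norm_nonneg _) hg m
    rw [h2, hAabs' x m]
    refine (norm_sum_le _ _).trans (Finset.sum_le_sum fun n _ => ?_)
    rw [norm_mul, Complex.norm_real, norm_norm]
  set S : Set ℝ := {s : ℝ | ∃ (x : lp (fun _ : ℕ => ℝ) p) (y : lp (fun _ : ℕ => ℝ) q),
      ‖x‖ * ‖y‖ ≤ 1 ∧ s = ∑' m, ∑' n, |x n| * |y m| * ‖A m n‖} with hS
  have hinner : ∀ (x : lp (fun _ : ℕ => ℝ) p) (y : lp (fun _ : ℕ => ℝ) q) (m : ℕ),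
      ∑' n, |x n| * |y m| * ‖A m n‖ = |y m| * ∑ n ∈ N, ‖A m n‖ * ‖x n‖ := by
    intro x y m
    rw [tsum_eq_sum (s := N) (f := fun n => |x n| * |y m| * ‖A m n‖)
      (fun n hn => by simp [hN m n hn]), Finset.mul_sum]
    apply Finset.sum_congr rfl
    intro n _
    rw [Real.norm_eq_abs]
    ring
  have h0S : (0 : ℝ) ∈ S := by
    refine ⟨0, 0, by simp, ?_⟩
    simp [lp.coeFn_zero]
  have hub : ∀ s ∈ S, s ≤ ‖Aabs‖ := by
    rintro s ⟨x, y, hxy, rfl⟩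
    obtain ⟨g, hg, hgn⟩ := lp_abs hr0 x
    set G : ℕ → ℝ := fun m => ∑ n ∈ N, ‖A m n‖ * ‖x n‖ with hG
    have hGnn : ∀ m, 0 ≤ G m :=
      fun m => Finset.sum_nonneg fun n _ => mul_nonneg (norm_nonneg _) (norm_nonneg _)
    have hGco : ∀ m, ‖(Aabs g) m‖ = G m :=
      fun m => (habs_coord g (fun n => ‖x n‖) (fun n => norm_nonneg _) hg m).2
    have hZmem : Memℓp G p := by
      apply memℓp_gen
      apply ((lp.memℓp (Aabs g)).summable hr0).congr
      intro m
      rw [hGco m, Real.norm_eq_abs, abs_of_nonneg (hGnn m)]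
    set Z : lp (fun _ : ℕ => ℝ) p := ⟨G, hZmem⟩ with hZ
    have hZco : ∀ m, ‖Z m‖ = ‖(Aabs g) m‖ := by
      intro m
      rw [hGco m]
      show ‖G m‖ = G m
      rw [Real.norm_eq_abs, abs_of_nonneg (hGnn m)]
    have hZn : ‖Z‖ = ‖Aabs g‖ :=
      le_antisymm (lp_norm_mono hr0 _ _ fun m => le_of_eq (hZco m))
        (lp_norm_mono hr0 _ _ fun m => le_of_eq (hZco m).symm)
    calc ∑' m, ∑' n, |x n| * |y m| * ‖A m n‖
        = ∑' m, ‖Z m‖ * ‖y m‖ := by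
          apply tsum_congr
          intro m
          rw [hinner x y m]
          show _ = ‖G m‖ * ‖y m‖
          rw [Real.norm_eq_abs (G m), abs_of_nonneg (hGnn m), Real.norm_eq_abs, mul_comm]
      _ ≤ ‖Z‖ * ‖y‖ := lp.tsum_mul_le_mul_norm' hpq Z y
      _ = ‖Aabs g‖ * ‖y‖ := by rw [hZn]
      _ ≤ (‖Aabs‖ * ‖g‖) * ‖y‖ := mul_le_mul_of_nonneg_right (Aabs.le_opNorm g) (norm_nonneg _)
      _ = ‖Aabs‖ * (‖x‖ * ‖y‖) := by rw [hgn]; ring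
      _ ≤ ‖Aabs‖ * 1 := mul_le_mul_of_nonneg_left hxy (norm_nonneg _)
      _ = ‖Aabs‖ := mul_one _
  have hlow : ∀ ε : ℝ, 0 < ε → ∃ s ∈ S, ‖Aabs‖ - ε ≤ s := by
    intro ε hε
    rcases le_or_gt ‖Aabs‖ ε with h | h
    · exact ⟨0, h0S, by linarith⟩
    · have hlt : ‖Aabs‖ - ε < ‖Aabs‖ := by linarith
      obtain ⟨x, hx1, hx2⟩ := Aabs.exists_lt_apply_of_lt_opNorm hlt
      obtain ⟨g, hg, hgn⟩ := lp_abs hr0 x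
      set G : ℕ → ℝ := fun m => ∑ n ∈ N, ‖A m n‖ * ‖x n‖ with hG
      have hGnn : ∀ m, 0 ≤ G m :=
        fun m => Finset.sum_nonneg fun n _ => mul_nonneg (norm_nonneg _) (norm_nonneg _)
      have hGco : ∀ m, ‖(Aabs g) m‖ = G m :=
        fun m => (habs_coord g (fun n => ‖x n‖) (fun n => norm_nonneg _) hg m).2
      set cn : ℝ := ‖Aabs g‖ with hcn
      have hc0 : 0 < cn := by
        have h1 := habs_mono x g hg
        have h2 : (0 : ℝ) < ‖Aabs‖ - ε := by linarith
        linarith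
      have hxRmem : Memℓp (fun n => ‖x n‖) p := by
        apply memℓp_gen
        simpa using (lp.memℓp x).summable hr0
      set xR : lp (fun _ : ℕ => ℝ) p := ⟨fun n => ‖x n‖, hxRmem⟩ with hxR
      have hxRco : ∀ n, ‖xR n‖ = ‖x n‖ := by
        intro n
        show ‖‖x n‖‖ = ‖x n‖
        rw [norm_norm]
      have hxRn : ‖xR‖ = ‖x‖ :=
        le_antisymm (lp_norm_mono hr0 _ _ fun n => le_of_eq (hxRco n))
          (lp_norm_mono hr0 _ _ fun n => le_of_eq (hxRco n).symm)
      have hrs : (p.toReal - 1) * q.toReal = p.toReal := hpq.sub_one_mul_conj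
      set Yf : ℕ → ℝ := fun m => G m ^ (p.toReal - 1) / cn ^ (p.toReal - 1) with hYf
      have hYnn : ∀ m, 0 ≤ Yf m :=
        fun m => div_nonneg (Real.rpow_nonneg (hGnn m) _) (Real.rpow_nonneg hc0.le _)
      have hYpow : ∀ m, ‖Yf m‖ ^ q.toReal = G m ^ p.toReal / cn ^ p.toReal := by
        intro m
        rw [Real.norm_eq_abs, abs_of_nonneg (hYnn m), hYf,
          Real.div_rpow (Real.rpow_nonneg (hGnn m) _) (Real.rpow_nonneg hc0.le _),
          ← Real.rpow_mul (hGnn m), ← Real.rpow_mul hc0.le, hrs]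
      have hGsum1 : Summable (fun m => G m ^ p.toReal) :=
        ((lp.memℓp (Aabs g)).summable hr0).congr (fun m => by rw [hGco m])
      have hGsum2 : ∑' m, G m ^ p.toReal = cn ^ p.toReal := by
        rw [hcn, lp.norm_rpow_eq_tsum hr0 (Aabs g)]
        exact tsum_congr fun m => by rw [hGco m]
      have hYmem : Memℓp Yf q := by
        apply memℓp_gen
        apply (hGsum1.div_const (cn ^ p.toReal)).congr
        intro m
        rw [hYpow m]
      set Y : lp (fun _ : ℕ => ℝ) q := ⟨Yf, hYmem⟩ with hY
      have hYco : ∀ m, Y m = Yf m := fun m => rfl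
      have hYn : ‖Y‖ = 1 := by
        have h1 : ‖Y‖ ^ q.toReal = 1 := by
          rw [lp.norm_rpow_eq_tsum hs0 Y, tsum_congr (fun m => hYpow m), tsum_div_const,
            hGsum2, div_self (ne_of_gt (Real.rpow_pos_of_pos hc0 _))]
        have h2 : (1 : ℝ) ^ q.toReal = 1 := Real.one_rpow _
        refine le_antisymm ?_ ?_
        · rw [← Real.rpow_le_rpow_iff (norm_nonneg _) zero_le_one hs0, h1, h2]
        · rw [← Real.rpow_le_rpow_iff zero_le_one (norm_nonneg _) hs0, h1, h2]
      refine ⟨∑' m, ∑' n, |xR n| * |Y m| * ‖A m n‖, ⟨xR, Y, ?_, rfl⟩, ?_⟩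
      · rw [hxRn, hYn, mul_one]
        exact hx1.le
      · have hval : ∑' m, ∑' n, |xR n| * |Y m| * ‖A m n‖ = cn := by
          rw [tsum_congr (fun m => hinner xR Y m)]
          have hpt : ∀ m, |Y m| * (∑ n ∈ N, ‖A m n‖ * ‖xR n‖)
              = G m ^ p.toReal / cn ^ (p.toReal - 1) := by
            intro m
            have hx' : ∑ n ∈ N, ‖A m n‖ * ‖xR n‖ = G m :=
              Finset.sum_congr rfl fun n _ => by rw [hxRco n]
            rw [hx', hYco m, abs_of_nonneg (hYnn m), hYf, div_mul_eq_mul_div]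
            congr 1
            have : G m ^ p.toReal = G m ^ (p.toReal - 1) * G m ^ (1 : ℝ) := by
              rw [← Real.rpow_add' (hGnn m) (by rw [sub_add_cancel]; positivity)]
              congr 1
              ring
            rw [this, Real.rpow_one]
          rw [tsum_congr hpt, tsum_div_const, hGsum2, ← Real.rpow_sub hc0]
          norm_num
        rw [hval]
        have h1 := habs_mono x g hg
        linarith
  refine le_antisymm ?_ (csSup_le ⟨0, h0S⟩ hub)
  have hbdd : BddAbove S := ⟨‖Aabs‖, hub⟩
  refine le_of_forall_pos_le_add fun ε hε => ?_
  obtain ⟨s, hsS, hs⟩ := hlow ε hε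
  have := le_csSup hbdd hsS
  linarith
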